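/- arXiv:2308.00901 — 2 statements merged into one kernel-verified Lean document; each statement's English description precedes it below -/
import Mathlib

section
/- Let λ be a nonzero real number and let n ≥ 1 be an integer. Then H_{n,−λ}/n = Σ_{m=1}^{n} C(n,m) (−1)^{m−1} H_{m,λ}(2). -/
open Finset

/-- The degenerate falling factorial `(x)_{n,λ} = x(x-λ)⋯(x-(n-1)λ)`, with `(x)_{0,λ} = 1`. -/
noncomputable def degFall (x lam : ℝ) (n : ℕ) : ℝ :=
  ∏ i ∈ Finset.range n, (x - i * lam)

/-- The degenerate harmonic numbers `H_{n,λ} = Σ_{k=1}^n (-λ)^(k-1) (1)_{k,1/λ} / k!`, `H_{0,λ}=0`. -/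
noncomputable def degHarm (lam : ℝ) (n : ℕ) : ℝ :=
  ∑ k ∈ Finset.Icc 1 n, (-lam) ^ (k - 1) * degFall 1 (1 / lam) k / (k.factorial : ℝ)

/-- The degenerate harmonic numbers of order `α`:
`H_{n,λ}(α) = Σ_{k=1}^n (-λ)^(k-1) (1)_{k,1/λ} / (k^α (k-1)!)`, `H_{0,λ}(α)=0`. -/
noncomputable def degHarmOrd (lam : ℝ) (α : ℕ) (n : ℕ) : ℝ :=
  ∑ k ∈ Finset.Icc 1 n,
    (-lam) ^ (k - 1) * degFall 1 (1 / lam) k / ((k : ℝ) ^ α * ((k - 1).factorial : ℝ))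

/-- The alternating degenerate harmonic numbers of order `α`:
`H̄_{n,λ}(α) = Σ_{k=1}^n C(n,k) λ^(k-1) (1)_{k,1/λ} / (k^α (k-1)!)`, `H̄_{0,λ}(α)=0`. -/
noncomputable def altDegHarmOrd (lam : ℝ) (α : ℕ) (n : ℕ) : ℝ :=
  ∑ k ∈ Finset.Icc 1 n,
    (n.choose k : ℝ) * lam ^ (k - 1) * degFall 1 (1 / lam) k /
      ((k : ℝ) ^ α * ((k - 1).factorial : ℝ))

/-- The degenerate logarithm: `degLog λ x = (x^λ - 1)/λ`, i.e. `log_λ(1+t) = degLog λ (1+t)`. -/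
noncomputable def degLog (lam x : ℝ) : ℝ :=
  (x ^ lam - 1) / lam

/-- The degenerate polylogarithm
`Li_{k,λ}(x) = Σ_{n=1}^∞ (-λ)^(n-1) (1)_{n,1/λ} x^n / ((n-1)! n^k)` (as a `tsum`, reindexed). -/
noncomputable def degPolylog (k : ℕ) (lam x : ℝ) : ℝ :=
  ∑' n : ℕ, (-lam) ^ n * degFall 1 (1 / lam) (n + 1) * x ^ (n + 1) /
    ((n.factorial : ℝ) * ((n : ℝ) + 1) ^ k)

/-- The degenerate hyperharmonic numbers of order `α`:
`H_{n,λ}^{(1)}(α) = H_{n,λ}(α)`, `H_{n,λ}^{(r)}(α) = Σ_{k=1}^n H_{k,λ}^{(r-1)}(α)` for `r ≥ 2`. -/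
noncomputable def degHyperHarm (lam : ℝ) (α : ℕ) : ℕ → ℕ → ℝ
  | 0, _ => 0
  | 1, n => degHarmOrd lam α n
  | r + 2, n => ∑ k ∈ Finset.Icc 1 n, degHyperHarm lam α (r + 1) k


noncomputable def rCh (x : ℝ) (k : ℕ) : ℝ := (∏ i ∈ Finset.range k, (x - i)) / (k.factorial : ℝ)

lemma rCh_zero (x : ℝ) : rCh x 0 = 1 := by simp [rCh]

lemma rCh_pascal (x : ℝ) (k : ℕ) : rCh (x+1) (k+1) = rCh x k + rCh x (k+1) := by
  have h1 : ∏ i ∈ Finset.range (k+1), (x + 1 - (i:ℕ)) = (x+1) * ∏ i ∈ Finset.range k, (x - i) := by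
    rw [Finset.prod_range_succ' (fun i => x + 1 - (i:ℕ)) k]
    rw [Finset.prod_congr rfl (fun i _ => by push_cast; ring :
      ∀ i ∈ Finset.range k, x + 1 - ((i+1 : ℕ):ℝ) = x - i)]
    push_cast; ring
  have hk : (k.factorial : ℝ) ≠ 0 := Nat.cast_ne_zero.mpr k.factorial_ne_zero
  have hk1 : ((k+1:ℕ) : ℝ) ≠ 0 := by positivity
  unfold rCh
  rw [h1, Finset.prod_range_succ, Nat.factorial_succ]
  push_cast
  field_simp
  ring

lemma vand (x : ℝ) : ∀ (n m : ℕ),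
    ∑ j ∈ Finset.range (n+1), (n.choose j : ℝ) * rCh x (j+m) = rCh (x+n) (n+m) := by
  intro n
  induction n with
  | zero => intro m; simp
  | succ n ih =>
    intro m
    have e1 : ∑ j ∈ Finset.range (n+2), ((n+1).choose j : ℝ) * rCh x (j+m)
        = (∑ j ∈ Finset.range (n+1), ((n+1).choose (j+1) : ℝ) * rCh x ((j+1)+m))
          + ((n+1).choose 0 : ℝ) * rCh x (0+m) := Finset.sum_range_succ' _ _
    have e2 : ∑ j ∈ Finset.range (n+2), (n.choose j : ℝ) * rCh x (j+m)
        = (∑ j ∈ Finset.range (n+1), (n.choose (j+1) : ℝ) * rCh x ((j+1)+m))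
          + (n.choose 0 : ℝ) * rCh x (0+m) := Finset.sum_range_succ' _ _
    have e3 : ∑ j ∈ Finset.range (n+2), (n.choose j : ℝ) * rCh x (j+m)
        = ∑ j ∈ Finset.range (n+1), (n.choose j : ℝ) * rCh x (j+m) := by
      rw [Finset.sum_range_succ, Nat.choose_succ_self]; simp
    have e4 : ∑ j ∈ Finset.range (n+1), ((n+1).choose (j+1) : ℝ) * rCh x ((j+1)+m)
        = (∑ j ∈ Finset.range (n+1), (n.choose j : ℝ) * rCh x (j+(m+1)))
          + ∑ j ∈ Finset.range (n+1), (n.choose (j+1) : ℝ) * rCh x ((j+1)+m) := by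
      rw [← Finset.sum_add_distrib]
      refine Finset.sum_congr rfl fun j _ => ?_
      rw [Nat.choose_succ_succ]
      have : (j+1)+m = j+(m+1) := by omega
      rw [this]; push_cast; ring
    have goal1 : ∑ j ∈ Finset.range (n+2), ((n+1).choose j : ℝ) * rCh x (j+m)
        = rCh (x+n) (n+m) + rCh (x+n) (n+(m+1)) := by
      rw [e1, e4]
      have : (∑ j ∈ Finset.range (n+1), (n.choose (j+1) : ℝ) * rCh x ((j+1)+m))
          + ((n+1).choose 0 : ℝ) * rCh x (0+m)
          = ∑ j ∈ Finset.range (n+1), (n.choose j : ℝ) * rCh x (j+m) := by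
        rw [← e3, e2]; simp
      rw [add_assoc, this, ih m, ih (m+1)]; ring
    rw [goal1]
    have : n+(m+1) = (n+m)+1 := by omega
    rw [this, ← rCh_pascal (x+n) (n+m)]
    have h1 : x + ((n:ℕ)+1 : ℕ) = x + n + 1 := by push_cast; ring
    have h2 : (n+1)+m = (n+m)+1 := by omega
    rw [h2, ← h1]

lemma hockey (x : ℝ) : ∀ n : ℕ, ∑ k ∈ Finset.range (n+1), rCh (x+k) k = rCh (x+n+1) n := by
  intro n
  induction n with
  | zero => simp [rCh]
  | succ n ih =>
    rw [Finset.sum_range_succ, ih]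
    have h1 : x + ((n+1 : ℕ) : ℝ) = (x+n) + 1 := by push_cast; ring
    rw [h1]
    exact (rCh_pascal (x+n+1) n).symm

lemma alt_prefix (n : ℕ) (hn : 1 ≤ n) : ∀ j : ℕ,
    ∑ m ∈ Finset.range (j+1), (-1:ℝ)^m * (n.choose m) = (-1:ℝ)^j * ((n-1).choose j) := by
  intro j
  induction j with
  | zero => simp
  | succ j ih =>
    rw [Finset.sum_range_succ, ih]
    have h : n.choose (j+1) = (n-1).choose j + (n-1).choose (j+1) := by
      conv_lhs => rw [← Nat.succ_pred_eq_of_pos hn]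
      exact Nat.choose_succ_succ _ _
    rw [h]; push_cast; ring

lemma alt_tail (n k : ℕ) (hn : 1 ≤ n) (hk : 1 ≤ k) (hkn : k ≤ n) :
    ∑ m ∈ Finset.Icc k n, (-1:ℝ)^(m-1) * (n.choose m) = (-1:ℝ)^(k-1) * ((n-1).choose (k-1)) := by
  have step : ∑ m ∈ Finset.Icc k n, (-1:ℝ)^(m-1) * (n.choose m)
      = -∑ m ∈ Finset.Icc k n, (-1:ℝ)^m * (n.choose m) := by
    rw [← Finset.sum_neg_distrib]
    refine Finset.sum_congr rfl fun m hm => ?_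
    have hm1 : 1 ≤ m := by simp [Finset.mem_Icc] at hm; omega
    have : m = (m-1)+1 := by omega
    rw [this]; simp only [Nat.add_sub_cancel, pow_succ]; ring
  rw [step]
  have hIcc : Finset.Icc k n = Finset.Ico k (n+1) := by rw [Finset.Ico_add_one_right_eq_Icc]
  rw [hIcc, Finset.sum_Ico_eq_sub _ (by omega : k ≤ n+1)]
  have htot : ∑ m ∈ Finset.range (n+1), (-1:ℝ)^m * (n.choose m) = 0 := by
    rw [alt_prefix n hn n, Nat.choose_eq_zero_of_lt (by omega)]; simp
  have hpre : ∑ m ∈ Finset.range k, (-1:ℝ)^m * (n.choose m)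
      = (-1:ℝ)^(k-1) * ((n-1).choose (k-1)) := by
    have : k = (k-1)+1 := by omega
    rw [this]; exact alt_prefix n hn (k-1)
  rw [htot, hpre]; ring

lemma P2 (lam : ℝ) (hlam : lam ≠ 0) (j : ℕ) :
    lam ^ j * degFall 1 (1/(-lam)) (j+1) / (((j+1).factorial : ℝ))
      = rCh (lam - 1 + ((j+1:ℕ):ℝ)) (j+1) / lam := by
  have hprod : degFall 1 (1/(-lam)) (j+1) = (∏ i ∈ Finset.range (j+1), (lam + i)) / lam^(j+1) := by
    unfold degFall
    rw [Finset.prod_congr rfl (fun i _ => by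
        rw [eq_div_iff hlam, sub_mul, one_mul, mul_one_div, div_neg, neg_mul, sub_neg_eq_add,
          div_mul_cancel₀ _ hlam] :
      ∀ i ∈ Finset.range (j+1), (1 - (i:ℝ) * (1/(-lam))) = (lam + i)/lam)]
    rw [Finset.prod_div_distrib, Finset.prod_const, Finset.card_range]
  have hrefl : ∏ i ∈ Finset.range (j+1), (lam + (i:ℝ))
      = ∏ i ∈ Finset.range (j+1), ((lam - 1 + ((j+1:ℕ):ℝ)) - i) := by
    rw [← Finset.prod_range_reflect (fun i => lam + (i:ℝ)) (j+1)]
    refine Finset.prod_congr rfl fun i hi => ?_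
    simp only [Finset.mem_range] at hi
    have h1 : j + 1 - 1 - i = j - i := by omega
    have h2 : ((j - i : ℕ) : ℝ) = (j:ℝ) - i := by
      have : i ≤ j := by omega
      push_cast [this]; ring
    rw [h1, h2]; push_cast; ring
  unfold rCh
  rw [hprod, hrefl]
  have hfac : (((j+1).factorial : ℕ) : ℝ) ≠ 0 := Nat.cast_ne_zero.mpr (Nat.factorial_ne_zero _)
  have hpow : lam^(j+1) = lam^j * lam := pow_succ lam j
  field_simp
  rw [hpow]; ring

lemma P1 (lam : ℝ) (hlam : lam ≠ 0) (n j : ℕ) (hn : 1 ≤ n) :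
    ((-1:ℝ)^j * (((n-1).choose j : ℕ) : ℝ))
        * ((-lam)^j * degFall 1 (1/lam) (j+1) / ((((j+1:ℕ)):ℝ)^2 * (j.factorial : ℝ)))
      = (n.choose (j+1) : ℝ) * rCh lam (j+1) / ((n:ℝ) * lam) := by
  have hprod : degFall 1 (1/lam) (j+1) = (∏ i ∈ Finset.range (j+1), (lam - i)) / lam^(j+1) := by
    unfold degFall
    rw [Finset.prod_congr rfl (fun i _ => by
        rw [eq_div_iff hlam, sub_mul, one_mul, mul_one_div, div_mul_cancel₀ _ hlam] :
      ∀ i ∈ Finset.range (j+1), (1 - (i:ℝ) * (1/lam)) = (lam - i)/lam)]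
    rw [Finset.prod_div_distrib, Finset.prod_const, Finset.card_range]
  have hnat : (n:ℝ) * (((n-1).choose j : ℕ) : ℝ) = (n.choose (j+1) : ℝ) * ((j:ℝ)+1) := by
    have h := Nat.add_one_mul_choose_eq (n-1) j
    rw [(by omega : n - 1 + 1 = n)] at h
    exact_mod_cast congrArg (Nat.cast : ℕ → ℝ) h
  have hneg : (-1:ℝ)^j * (-lam)^j = lam^j := by
    rw [← mul_pow]; norm_num
  unfold rCh
  rw [hprod]
  have hfac : (((j+1).factorial : ℕ) : ℝ) = ((j:ℝ)+1) * (j.factorial : ℝ) := by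
    rw [Nat.factorial_succ]; push_cast; ring
  have hjf : (j.factorial : ℝ) ≠ 0 := Nat.cast_ne_zero.mpr (Nat.factorial_ne_zero _)
  have hj1 : ((j:ℝ)+1) ≠ 0 := by positivity
  have hnn : (n:ℝ) ≠ 0 := Nat.cast_ne_zero.mpr (by omega)
  have hpow : lam^(j+1) = lam^j * lam := pow_succ lam j
  rw [hfac, hpow]
  push_cast
  field_simp
  linear_combination ((∏ i ∈ Finset.range (j+1), (lam - (i:ℝ))) * (((n-1).choose j : ℕ):ℝ) * (n:ℝ)) * hneg +
    ((∏ i ∈ Finset.range (j+1), (lam - (i:ℝ))) * lam ^ j) * hnat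

theorem stmt_8 (lam : ℝ) (hlam : lam ≠ 0) (n : ℕ) (hn : 1 ≤ n) :
    degHarm (-lam) n / (n : ℝ) =
      ∑ m ∈ Finset.Icc 1 n, (n.choose m : ℝ) * (-1 : ℝ) ^ (m - 1) * degHarmOrd lam 2 m := by
  have hnn : (n:ℝ) ≠ 0 := Nat.cast_ne_zero.mpr (by omega)
  have hsum_eq : (∑ k ∈ Finset.Icc 1 n, rCh (lam - 1 + (k:ℝ)) k)
      = ∑ k ∈ Finset.Icc 1 n, (n.choose k : ℝ) * rCh lam k := by
    have hA : ∑ k ∈ Finset.range (n+1), rCh (lam - 1 + (k:ℝ)) k = rCh (lam + n) n := by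
      rw [hockey (lam - 1) n]; congr 1; ring
    have hB : ∑ k ∈ Finset.range (n+1), (n.choose k : ℝ) * rCh lam k = rCh (lam + n) n := by
      have := vand lam n 0
      simpa using this
    have hIA : ∑ k ∈ Finset.Icc 1 n, rCh (lam - 1 + (k:ℝ)) k
        = (∑ k ∈ Finset.range (n+1), rCh (lam - 1 + (k:ℝ)) k)
          - ∑ k ∈ Finset.range 1, rCh (lam - 1 + (k:ℝ)) k := by
      rw [← Finset.Ico_add_one_right_eq_Icc, Finset.sum_Ico_eq_sub _ (by omega : 1 ≤ n+1)]
    have hIB : ∑ k ∈ Finset.Icc 1 n, (n.choose k : ℝ) * rCh lam k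
        = (∑ k ∈ Finset.range (n+1), (n.choose k : ℝ) * rCh lam k)
          - ∑ k ∈ Finset.range 1, (n.choose k : ℝ) * rCh lam k := by
      rw [← Finset.Ico_add_one_right_eq_Icc, Finset.sum_Ico_eq_sub _ (by omega : 1 ≤ n+1)]
    rw [hIA, hIB, hA, hB]
    simp [rCh_zero]
  have hL : degHarm (-lam) n = (∑ k ∈ Finset.Icc 1 n, rCh (lam - 1 + (k:ℝ)) k) / lam := by
    unfold degHarm
    simp only [neg_neg]
    rw [Finset.sum_div]
    refine Finset.sum_congr rfl fun k hk => ?_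
    simp only [Finset.mem_Icc] at hk
    obtain ⟨j, rfl⟩ : ∃ j, k = j + 1 := ⟨k-1, by omega⟩
    simp only [Nat.add_sub_cancel]
    exact P2 lam hlam j
  have hR : (∑ m ∈ Finset.Icc 1 n, (n.choose m : ℝ) * (-1:ℝ)^(m-1) * degHarmOrd lam 2 m)
      = ∑ k ∈ Finset.Icc 1 n, (n.choose k : ℝ) * rCh lam k / ((n:ℝ) * lam) := by
    unfold degHarmOrd
    simp only [Finset.mul_sum]
    rw [Finset.sum_comm' (t' := Finset.Icc 1 n) (s' := fun k => Finset.Icc k n)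
      (fun m k => by simp only [Finset.mem_Icc]; omega)]
    refine Finset.sum_congr rfl fun k hk => ?_
    simp only [Finset.mem_Icc] at hk
    obtain ⟨j, rfl⟩ : ∃ j, k = j + 1 := ⟨k-1, by omega⟩
    rw [← Finset.sum_mul]
    have htail : ∑ m ∈ Finset.Icc (j+1) n, (n.choose m : ℝ) * (-1:ℝ)^(m-1)
        = (-1:ℝ)^j * (((n-1).choose j : ℕ) : ℝ) := by
      have h := alt_tail n (j+1) hn (by omega) hk.2
      simp only [Nat.add_sub_cancel] at h
      rw [← h]
      exact Finset.sum_congr rfl fun m _ => mul_comm _ _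
    rw [htail]
    simp only [Nat.add_sub_cancel]
    exact P1 lam hlam n j hn
  rw [hR, ← Finset.sum_div, ← hsum_eq, hL, div_div, mul_comm lam (n:ℝ)]
end

section
/- Let λ be a nonzero real number and let n ≥ 1 be an integer. Then H_{n,λ}(2) = Σ_{m=1}^{n} C(n,m) (−1)^{m−1} H_{m,−λ}/m. -/
open Finset

lemma degFall_succ (x mu : ℝ) (k : ℕ) :
    degFall x mu (k+1) = degFall x mu k * (x - k * mu) := by
  simp [degFall, Finset.prod_range_succ]

lemma degFall_shift (mu : ℝ) (t : ℕ) :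
    degFall 1 mu (t+1) = ∏ i ∈ Finset.range t, (1 - (i+1) * mu) := by
  rw [degFall, Finset.prod_range_succ']
  push_cast
  simp

lemma vander (a b : ℝ) (m : ℕ) : degFall (a+b) 1 m =
    ∑ k ∈ range (m+1), (m.choose k : ℝ) * degFall a 1 k * degFall b 1 (m-k) := by
  induction m with
  | zero => simp [degFall]
  | succ m ih =>
    have key : ∀ k ∈ range (m+1),
        (m.choose k : ℝ) * degFall a 1 k * degFall b 1 (m-k) * ((a+b) - m)
        = (m.choose k : ℝ) * degFall a 1 (k+1) * degFall b 1 (m-k)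
          + (m.choose k : ℝ) * degFall a 1 k * degFall b 1 (m-k+1) := by
      intro k hk
      have hk' : k ≤ m := by simpa [Nat.lt_succ_iff] using hk
      have hc : ((m - k : ℕ) : ℝ) = (m : ℝ) - k := by
        rw [Nat.cast_sub hk']
      rw [degFall_succ, degFall_succ, hc]
      ring
    have step1 : degFall (a+b) 1 (m+1) =
        ∑ k ∈ range (m+1), ((m.choose k : ℝ) * degFall a 1 (k+1) * degFall b 1 (m-k)
          + (m.choose k : ℝ) * degFall a 1 k * degFall b 1 (m-k+1)) := by
      rw [degFall_succ, ih, Finset.sum_mul]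
      simp only [mul_one]
      exact Finset.sum_congr rfl key
    rw [step1, Finset.sum_add_distrib]
    -- now handle the target sum
    rw [Finset.sum_range_succ' (fun k => ((m+1).choose k : ℝ) * degFall a 1 k * degFall b 1 (m+1-k)) (m+1)]
    have h2 : ∀ k ∈ range (m+1),
        (((m+1).choose (k+1) : ℝ)) * degFall a 1 (k+1) * degFall b 1 (m+1-(k+1))
        = (m.choose k : ℝ) * degFall a 1 (k+1) * degFall b 1 (m-k)
          + (m.choose (k+1) : ℝ) * degFall a 1 (k+1) * degFall b 1 (m-k) := by
      intro k hk
      rw [Nat.choose_succ_succ, Nat.succ_sub_succ]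
      push_cast
      ring
    rw [Finset.sum_congr rfl h2, Finset.sum_add_distrib]
    -- remains: match second pieces
    have h3 : ∑ k ∈ range (m+1), (m.choose k : ℝ) * degFall a 1 k * degFall b 1 (m-k+1)
        = ∑ k ∈ range (m+1), (m.choose (k+1) : ℝ) * degFall a 1 (k+1) * degFall b 1 (m-k)
          + ((m+1).choose 0 : ℝ) * degFall a 1 0 * degFall b 1 (m+1-0) := by
      rw [Finset.sum_range_succ' (fun k => (m.choose k : ℝ) * degFall a 1 k * degFall b 1 (m-k+1)) m,
        Finset.sum_range_succ (fun k => (m.choose (k+1) : ℝ) * degFall a 1 (k+1) * degFall b 1 (m-k))]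
      simp only [Nat.choose_succ_self, Nat.cast_zero, zero_mul, add_zero, Nat.choose_zero_right,
        Nat.cast_one, one_mul, Nat.sub_zero]
      congr 1
      refine Finset.sum_congr rfl fun k hk => ?_
      have hk' : k < m := Finset.mem_range.mp hk
      have : m - (k+1) + 1 = m - k := by omega
      rw [this]
    rw [h3]
    ring

lemma degFall_nat (n j : ℕ) (h : j ≤ n) :
    degFall (n:ℝ) 1 j * ((n-j).factorial : ℝ) = (n.factorial : ℝ) := by
  induction j with
  | zero => simp [degFall]
  | succ j ih =>
    have h' : j ≤ n := Nat.le_of_succ_le h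
    have h1 : n - j = (n - (j+1)) + 1 := by omega
    have h2 : ((n - (j+1) + 1 : ℕ):ℝ) = (n:ℝ) - j := by
      have h3 : n - (j+1) + 1 = n - j := by omega
      rw [h3, Nat.cast_sub h']
    have hfac : ((n - j).factorial : ℝ) = ((n:ℝ) - j) * ((n - (j+1)).factorial : ℝ) := by
      rw [h1, Nat.factorial_succ, Nat.cast_mul, h2]
    have ih' := ih h'
    rw [hfac] at ih'
    rw [degFall_succ, mul_one]
    linear_combination ih'

lemma altsum (n M : ℕ) : ∑ m ∈ range (M+1), (-1:ℝ)^m * ((n+1).choose m : ℝ)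
    = (-1:ℝ)^M * (n.choose M : ℝ) := by
  induction M with
  | zero => simp
  | succ M ih =>
    rw [Finset.sum_range_succ, ih, Nat.choose_succ_succ]
    push_cast
    ring

lemma icc_altsum (N j : ℕ) (hj : 1 ≤ j) (hjn : j ≤ N+1) :
    ∑ m ∈ Icc j (N+1), (-1:ℝ)^(m-1) * ((N+1).choose m : ℝ)
      = (-1:ℝ)^(j-1) * (N.choose (j-1) : ℝ) := by
  obtain ⟨t, rfl⟩ : ∃ t, j = t+1 := ⟨j-1, by omega⟩
  have key : ∑ m ∈ Icc (t+1) (N+1), (-1:ℝ)^m * ((N+1).choose m : ℝ)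
      = -((-1:ℝ)^t * (N.choose t : ℝ)) := by
    have h0 : ∑ m ∈ Ico 0 (t+1), (-1:ℝ)^m * ((N+1).choose m : ℝ)
        + ∑ m ∈ Ico (t+1) (N+2), (-1:ℝ)^m * ((N+1).choose m : ℝ)
        = ∑ m ∈ Ico 0 (N+2), (-1:ℝ)^m * ((N+1).choose m : ℝ) :=
      Finset.sum_Ico_consecutive _ (Nat.zero_le _) (by omega)
    have hfull : ∑ m ∈ Ico 0 (N+2), (-1:ℝ)^m * ((N+1).choose m : ℝ) = 0 := by
      rw [← Finset.range_eq_Ico, altsum N (N+1)]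
      simp [Nat.choose_succ_self]
    have hinit : ∑ m ∈ Ico 0 (t+1), (-1:ℝ)^m * ((N+1).choose m : ℝ)
        = (-1:ℝ)^t * (N.choose t : ℝ) := by
      rw [← Finset.range_eq_Ico, altsum N t]
    have he : Icc (t+1) (N+1) = Ico (t+1) (N+2) := by rw [← Finset.Ico_add_one_right_eq_Icc]; rfl
    rw [he]
    linarith [h0, hfull, hinit]
  have hsign : ∀ m ∈ Icc (t+1) (N+1), (-1:ℝ)^(m-1) * ((N+1).choose m : ℝ)
      = -((-1:ℝ)^m * ((N+1).choose m : ℝ)) := by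
    intro m hm
    have hm1 : 1 ≤ m := le_trans (Nat.le_add_left 1 t) (Finset.mem_Icc.mp hm).1
    obtain ⟨s, rfl⟩ : ∃ s, m = s+1 := ⟨m-1, by omega⟩
    rw [Nat.add_sub_cancel, pow_succ]
    ring
  rw [Finset.sum_congr rfl hsign, Finset.sum_neg_distrib, key, neg_neg, Nat.add_sub_cancel]

lemma convP1 (lam : ℝ) (hlam : lam ≠ 0) (t : ℕ) :
    (-1:ℝ)^t * lam^t * degFall 1 (1/(-lam)) (t+1) = degFall (-lam-1) 1 t := by
  have hc : (1:ℝ) * (-lam) * (1/(-lam)) = 1 := by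
    rw [one_mul, mul_one_div_cancel (neg_ne_zero.mpr hlam)]
  rw [degFall_shift]
  rw [show ((-1:ℝ)^t * lam^t) = ∏ _i ∈ range t, (-lam) by
    rw [Finset.prod_const, Finset.card_range]; ring]
  rw [← Finset.prod_mul_distrib, degFall]
  refine Finset.prod_congr rfl fun i _ => ?_
  linear_combination (-(i:ℝ)-1) * hc

lemma convP2 (lam : ℝ) (hlam : lam ≠ 0) (t : ℕ) :
    (-lam)^t * degFall 1 (1/lam) (t+1) = degFall ((t:ℝ) - lam) 1 t := by
  have hc : lam * (1/lam) = 1 := mul_one_div_cancel hlam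
  rw [degFall_shift]
  rw [show ((-lam:ℝ)^t) = ∏ _i ∈ range t, (-lam) by
    rw [Finset.prod_const, Finset.card_range]]
  rw [← Finset.prod_mul_distrib, degFall]
  rw [← Finset.prod_range_reflect (fun i => ((t:ℝ) - lam - i * 1)) t]
  refine Finset.prod_congr rfl fun i hi => ?_
  have hi' : i < t := Finset.mem_range.mp hi
  have hcast : ((t - 1 - i : ℕ) : ℝ) = (t:ℝ) - 1 - i := by
    rw [Nat.cast_sub (by omega : i ≤ t - 1), Nat.cast_sub (by omega : 1 ≤ t)]
    norm_num
  simp only [hcast]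
  linear_combination ((i:ℝ)+1) * hc

lemma key_sum (lam : ℝ) (hlam : lam ≠ 0) (N : ℕ) :
    ∑ m ∈ Icc 1 (N+1), ((N+1).choose m : ℝ) * (-1:ℝ)^(m-1) * degHarm (-lam) m
      = (-lam)^N * degFall 1 (1/lam) (N+1) / ((N+1).factorial : ℝ) := by
  have hexp : ∀ m : ℕ, degHarm (-lam) m
      = ∑ j ∈ Icc 1 m, lam^(j-1) * degFall 1 (1/(-lam)) j / (j.factorial : ℝ) := by
    intro m; simp [degHarm, neg_neg]
  -- expand and swap
  have step1 : ∑ m ∈ Icc 1 (N+1), ((N+1).choose m : ℝ) * (-1:ℝ)^(m-1) * degHarm (-lam) m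
      = ∑ j ∈ Icc 1 (N+1), ∑ m ∈ Icc j (N+1),
          ((N+1).choose m : ℝ) * (-1:ℝ)^(m-1) *
            (lam^(j-1) * degFall 1 (1/(-lam)) j / (j.factorial : ℝ)) := by
    simp only [hexp, Finset.mul_sum]
    exact Finset.sum_comm' (by intro m j; simp only [Finset.mem_Icc]; omega)
  rw [step1]
  -- evaluate inner sums
  have step2 : ∀ j ∈ Icc 1 (N+1), ∑ m ∈ Icc j (N+1),
        ((N+1).choose m : ℝ) * (-1:ℝ)^(m-1) *
          (lam^(j-1) * degFall 1 (1/(-lam)) j / (j.factorial : ℝ))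
      = ((-1:ℝ)^(j-1) * (N.choose (j-1) : ℝ)) *
          (lam^(j-1) * degFall 1 (1/(-lam)) j / (j.factorial : ℝ)) := by
    intro j hj
    obtain ⟨hj1, hj2⟩ := Finset.mem_Icc.mp hj
    rw [← Finset.sum_mul, ← icc_altsum N j hj1 hj2]
    congr 1
    exact Finset.sum_congr rfl fun m _ => by ring
  rw [Finset.sum_congr rfl step2]
  -- reindex to range
  have step3 : ∑ j ∈ Icc 1 (N+1), ((-1:ℝ)^(j-1) * (N.choose (j-1) : ℝ)) *
        (lam^(j-1) * degFall 1 (1/(-lam)) j / (j.factorial : ℝ))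
      = ∑ t ∈ range (N+1), (N.choose t : ℝ) * degFall (-lam-1) 1 t / ((t+1).factorial : ℝ) := by
    rw [← Finset.Ico_add_one_right_eq_Icc, Finset.sum_Ico_eq_sum_range]
    refine Finset.sum_congr (by norm_num) fun t _ => ?_
    have h1 : 1 + t - 1 = t := by omega
    rw [h1, show 1 + t = t + 1 from by omega]
    rw [← convP1 lam hlam t]
    ring
  rw [step3]
  -- RHS via convP2 and vander
  have hb : ((-lam) - 1) + ((N:ℝ)+1) = (N:ℝ) - lam := by ring
  have hr : (-lam)^N * degFall 1 (1/lam) (N+1) = degFall (((N:ℝ)+1) - 1 - lam + 0) 1 N := by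
    rw [convP2 lam hlam N]; norm_num
  have hv := vander (-lam-1) ((N:ℝ)+1) N
  rw [hb] at hv
  have hr2 : (-lam)^N * degFall 1 (1/lam) (N+1)
      = ∑ t ∈ range (N+1), (N.choose t : ℝ) * degFall (-lam-1) 1 t * degFall ((N:ℝ)+1) 1 (N-t) := by
    rw [convP2 lam hlam N, ← hv]
  rw [hr2, Finset.sum_div]
  refine Finset.sum_congr rfl fun t ht => ?_
  have ht' : t ≤ N := Nat.lt_succ_iff.mp (Finset.mem_range.mp ht)
  have hd := degFall_nat (N+1) (N-t) (by omega)
  rw [show N+1-(N-t) = t+1 from by omega] at hd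
  have hfac1 : ((t+1).factorial : ℝ) ≠ 0 := Nat.cast_ne_zero.mpr (Nat.factorial_ne_zero _)
  have hfac2 : (((N+1)).factorial : ℝ) ≠ 0 := Nat.cast_ne_zero.mpr (Nat.factorial_ne_zero _)
  have hcast : (((N+1:ℕ)):ℝ) = (N:ℝ)+1 := by push_cast; ring
  rw [hcast] at hd
  field_simp
  linear_combination (-(N.choose t : ℝ) * degFall (-lam-1) 1 t) * hd


theorem stmt_9 (lam : ℝ) (hlam : lam ≠ 0) (n : ℕ) (hn : 1 ≤ n) :
    degHarmOrd lam 2 n =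
      ∑ m ∈ Finset.Icc 1 n,
        (n.choose m : ℝ) * (-1 : ℝ) ^ (m - 1) * (degHarm (-lam) m / (m : ℝ)) := by
  induction n, hn using Nat.le_induction with
  | base => simp [degHarmOrd, degHarm, degFall]
  | succ n hn ih =>
    have hfac2 : (((n+1)).factorial : ℝ) = ((n:ℝ)+1) * (n.factorial : ℝ) := by
      rw [Nat.factorial_succ]; push_cast; ring
    have hn1 : ((n:ℝ)+1) ≠ 0 := by positivity
    have hLfac : ((n.factorial : ℝ)) ≠ 0 := Nat.cast_ne_zero.mpr (Nat.factorial_ne_zero _)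
    -- left side split
    have hL : degHarmOrd lam 2 (n+1) = degHarmOrd lam 2 n
        + (-lam)^n * degFall 1 (1/lam) (n+1) / (((n:ℝ)+1)^2 * (n.factorial : ℝ)) := by
      rw [degHarmOrd, Finset.sum_Icc_succ_top (by omega), ← degHarmOrd, Nat.add_sub_cancel]
      push_cast
      ring
    rw [hL, ih]
    -- right side manipulations
    have pascal : ∀ m ∈ Icc 1 (n+1),
        ((n+1).choose m : ℝ) * (-1:ℝ)^(m-1) * (degHarm (-lam) m / (m:ℝ))
        = (n.choose m : ℝ) * (-1:ℝ)^(m-1) * (degHarm (-lam) m / (m:ℝ))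
          + (n.choose (m-1) : ℝ) * (-1:ℝ)^(m-1) * (degHarm (-lam) m / (m:ℝ)) := by
      intro m hm
      have hm1 : 1 ≤ m := (Finset.mem_Icc.mp hm).1
      obtain ⟨s, rfl⟩ : ∃ s, m = s+1 := ⟨m-1, by omega⟩
      rw [Nat.choose_succ_succ' n s, Nat.add_sub_cancel]
      push_cast
      ring
    rw [Finset.sum_congr rfl pascal, Finset.sum_add_distrib]
    -- first piece equals the Icc 1 n sum
    have hA : ∑ m ∈ Icc 1 (n+1), (n.choose m : ℝ) * (-1:ℝ)^(m-1) * (degHarm (-lam) m / (m:ℝ))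
        = ∑ m ∈ Icc 1 n, (n.choose m : ℝ) * (-1:ℝ)^(m-1) * (degHarm (-lam) m / (m:ℝ)) := by
      rw [Finset.sum_Icc_succ_top (by omega)]
      simp [Nat.choose_succ_self]
    -- second piece via key_sum
    have hB : ∑ m ∈ Icc 1 (n+1), (n.choose (m-1) : ℝ) * (-1:ℝ)^(m-1) * (degHarm (-lam) m / (m:ℝ))
        = (-lam)^n * degFall 1 (1/lam) (n+1) / (((n:ℝ)+1) * ((n+1).factorial : ℝ)) := by
      have hterm : ∀ m ∈ Icc 1 (n+1),
          (n.choose (m-1) : ℝ) * (-1:ℝ)^(m-1) * (degHarm (-lam) m / (m:ℝ))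
          = (((n+1).choose m : ℝ) * (-1:ℝ)^(m-1) * degHarm (-lam) m) / ((n:ℝ)+1) := by
        intro m hm
        have hm1 : 1 ≤ m := (Finset.mem_Icc.mp hm).1
        have hmr : ((m:ℝ)) ≠ 0 := Nat.cast_ne_zero.mpr (by omega)
        have hch := Nat.add_one_mul_choose_eq n (m-1)
        rw [show m-1+1 = m from by omega] at hch
        have hchr : ((n:ℝ)+1) * (n.choose (m-1) : ℝ) = ((n+1).choose m : ℝ) * (m:ℝ) := by
          have := congrArg (Nat.cast : ℕ → ℝ) hch
          push_cast at this
          linarith [this]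
        field_simp
        linear_combination (degHarm (-lam) m) * hchr
      rw [Finset.sum_congr rfl hterm, ← Finset.sum_div, key_sum lam hlam n]
      rw [div_div]
      ring
    rw [hA, hB, hfac2]
    congr 1
    ring
end
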